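/- Let k ≥ 7 be an odd integer. Both P ∪ {e_1, e_2} and Q ∪ {e_1, e_2} are free bases of the matroid N_k. -/

import Mathlib

open Set

namespace Matroid

variable {α : Type}

/-- Deletion of a set from a matroid. -/
def delete' (M : Matroid α) (D : Set α) : Matroid α := M ↾ (M.E \ D)

/-- Contraction of a set in a matroid. -/
def contract' (M : Matroid α) (C : Set α) : Matroid α := (M✶.delete' C)✶

/-- A circuit: a minimal dependent set. -/
def IsCircuit' (M : Matroid α) (C : Set α) : Prop :=
  M.Dep C ∧ ∀ D, D ⊂ C → M.Indep D

/-- A cocircuit: a circuit of the dual. -/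
def IsCocircuit' (M : Matroid α) (C : Set α) : Prop := M✶.IsCircuit' C

/-- A hyperplane: a flat whose rank is one less than the rank of the matroid. -/
def IsHyperplane (M : Matroid α) (H : Set α) : Prop :=
  M.IsFlat H ∧ ∃ I B, M.IsBasis I H ∧ M.IsBase B ∧ I.encard + 1 = B.encard

/-- A circuit-hyperplane: a set that is both a circuit and a hyperplane. -/
def IsCircuitHyperplane (M : Matroid α) (C : Set α) : Prop :=
  M.IsCircuit' C ∧ M.IsHyperplane C

/-- A free basis: a basis `B` such that `B ∪ {e}` is a circuit for every `e ∈ E(M) - B`. -/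
def IsFreeBase (M : Matroid α) (B : Set α) : Prop :=
  M.IsBase B ∧ ∀ e ∈ M.E \ B, M.IsCircuit' (insert e B)

/-- A connected matroid: the ground set is nonempty and every two distinct elements of the
ground set lie in a common circuit. -/
def IsConnected (M : Matroid α) : Prop :=
  M.E.Nonempty ∧ ∀ x ∈ M.E, ∀ y ∈ M.E, x ≠ y → ∃ C, M.IsCircuit' C ∧ x ∈ C ∧ y ∈ C

/-- `M` is a frame matroid: there is a matroid `M'` whose ground set is the union of (a copy of)
`E(M)` and a set `V` disjoint from it, such that `V` is a basis of `M'`, deleting `V` from `M'`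
yields (the copy of) `M`, and for every `e ∈ E(M)` the unique circuit of `M'` contained in
`V ∪ {e}` has at most three elements. -/
def IsFrame (M : Matroid α) : Prop :=
  ∃ (β : Type) (M' : Matroid (α ⊕ β)) (V : Set (α ⊕ β)),
    M'.Finite ∧
    M'.E = (Sum.inl '' M.E) ∪ V ∧
    Disjoint (Sum.inl '' M.E) V ∧
    M'.IsBase V ∧
    M'.delete' V = M.map Sum.inl Sum.inl_injective.injOn ∧
    ∀ e ∈ M.E, ∃ C, M'.IsCircuit' C ∧ C ⊆ insert (Sum.inl e) V ∧ C.encard ≤ 3 ∧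
      ∀ C', M'.IsCircuit' C' → C' ⊆ insert (Sum.inl e) V → C' = C

/-- `N` is a graphic matroid: there are a set `W` of vertices and an assignment of an unordered
pair of vertices to each element of the ground set, such that a subset `I` of the ground set is
independent exactly when every nonempty `J ⊆ I` uses strictly more vertices than it has edges
(i.e. the associated multigraph is a forest). -/
def IsGraphic (N : Matroid α) : Prop :=
  ∃ (W : Type) (f : α → Sym2 W),
    ∀ I : Set α, N.Indep I ↔ (I ⊆ N.E ∧ ∀ J ⊆ I, J.Nonempty →
      J.encard < {w : W | ∃ e ∈ J, w ∈ f e}.encard)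

/-- `M` is a lifted-graphic matroid: there is a matroid `M'` whose ground set is (a copy of)
`E(M)` plus one extra element `f`, such that `M' \ f = M` and `M' / f` is graphic. -/
def IsLiftedGraphic (M : Matroid α) : Prop :=
  ∃ M' : Matroid (α ⊕ Unit),
    M'.Finite ∧
    M'.E = (Sum.inl '' M.E) ∪ {Sum.inr ()} ∧
    M'.delete' {Sum.inr ()} = M.map Sum.inl Sum.inl_injective.injOn ∧
    (M'.contract' {Sum.inr ()}).IsGraphic

/-- `M` and `N` are isomorphic matroids. -/
def Iso' {β : Type} (M : Matroid α) (N : Matroid β) : Prop :=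
  ∃ (f : α → β) (hf : Set.InjOn f M.E), M.map f hf = N

end Matroid

section Graphs

/-- The edges of the graph `G_k`: `a i`, `b i`, `c i`, `d i` for `i : Fin k`
(with `i` representing the index `i+1` of the paper), together with `e1` and `e2`. -/
inductive Edge (k : ℕ) : Type where
  | a : Fin k → Edge k
  | b : Fin k → Edge k
  | c : Fin k → Edge k
  | d : Fin k → Edge k
  | e1 : Edge k
  | e2 : Edge k
deriving DecidableEq

/-- The vertices of `G_k`: `Sum.inl (i, false)` is `x_{i+1}` (so `Sum.inl (0, false)` is `s_1`),
`Sum.inl (i, true)` is `y_{i+1}` (so `Sum.inl (0, true)` is `s_2`), `Sum.inr false` is `t_1` and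
`Sum.inr true` is `t_2`.  There are `2k+2` vertices in all. -/
abbrev Vertex (k : ℕ) := (Fin k × Bool) ⊕ Bool

variable {k : ℕ}

/-- The tail of each edge of `G_k`. -/
def Edge.tail [NeZero k] : Edge k → Vertex k
  | .a i => .inl (i, false)
  | .b i => .inl (i, false)
  | .c i => .inl (i, true)
  | .d i => .inl (i, true)
  | .e1 => .inl (0, false)
  | .e2 => .inl (0, true)

/-- The head of each edge of `G_k`; the head `x_1` is the vertex `t_1 = Sum.inr false` and
the head `y_1` is the vertex `t_2 = Sum.inr true`. -/
def Edge.head [NeZero k] : Edge k → Vertex k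
  | .a i => if i + 1 = 0 then .inr false else .inl (i + 1, false)
  | .b i => if i + 1 = 0 then .inr true else .inl (i + 1, true)
  | .c i => if i + 1 = 0 then .inr false else .inl (i + 1, false)
  | .d i => if i + 1 = 0 then .inr true else .inl (i + 1, true)
  | .e1 => .inr false
  | .e2 => .inr true

/-- The set `P = {a_1, …, a_k, d_1, …, d_k}`. -/
def Pset (k : ℕ) : Set (Edge k) := {e | ∃ i, e = .a i ∨ e = .d i}

/-- The set `Q = {b_1, …, b_k, c_1, …, c_k}`. -/
def Qset (k : ℕ) : Set (Edge k) := {e | ∃ i, e = .b i ∨ e = .c i}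

/-- The last index of `Fin k`, representing the paper's index `k`. -/
def lastIdx (k : ℕ) [NeZero k] : Fin k :=
  ⟨k - 1, Nat.sub_lt (Nat.pos_of_ne_zero (NeZero.ne k)) Nat.one_pos⟩

/-- The group labels for the frame construction: `γ(a_k) = γ(b_k) = γ(c_k) = γ(d_k) = 2` and
`γ(e) = 1` for every other edge. -/
def gammaF [NeZero k] : Edge k → ℝ
  | .a i => if i = lastIdx k then 2 else 1
  | .b i => if i = lastIdx k then 2 else 1
  | .c i => if i = lastIdx k then 2 else 1
  | .d i => if i = lastIdx k then 2 else 1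
  | .e1 => 1
  | .e2 => 1

/-- The matrix `A_k` of the frame construction, with rows indexed by the vertices of `G_k` and
columns by its edges: the column of an edge `e` has entry `1` in the row of the tail of `e`,
entry `-γ(e)` in the row of the head of `e`, and `0` elsewhere. -/
def frameMatrix (k : ℕ) [NeZero k] : Matrix (Vertex k) (Edge k) ℝ :=
  fun v e => if v = e.tail then 1 else if v = e.head then -gammaF e else 0

/-- The group labels for the lifted construction: `γ(a_i) = γ(d_i) = 1` for all `i` and
`γ(e) = 0` for every other edge. -/
def gammaL : Edge k → ℝ
  | .a _ => 1
  | .d _ => 1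
  | _ => 0

/-- The matrix `A_k^L` of the lifted construction, with rows indexed by the vertices of `G_k`
together with one additional row: the column of an edge `e` has entry `1` in the row of the tail
of `e`, entry `-1` in the row of the head of `e`, entry `γ(e)` in the additional row, and `0`
elsewhere. -/
def liftMatrix (k : ℕ) [NeZero k] : Matrix (Vertex k ⊕ Unit) (Edge k) ℝ :=
  fun v e => match v with
  | .inl v => if v = e.tail then 1 else if v = e.head then -1 else 0
  | .inr _ => gammaL e

/-- `N` is the matroid on the column index set of the matrix `A` in which a set is independent
if and only if the corresponding columns of `A` are linearly independent over `ℝ`. -/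
def IsColMatroid {m n : Type} (A : Matrix m n ℝ) (N : Matroid n) : Prop :=
  N.E = Set.univ ∧
  ∀ I : Set n, N.Indep I ↔ LinearIndependent ℝ (fun e : I => fun v : m => A v (e : n))

/-- The vertex of the contracted graph `G_k / {e_1, e_2}` corresponding to a vertex of `G_k`:
`t_1` is identified with `s_1` and `t_2` with `s_2`, leaving the `2k` vertices `Fin k × Bool`. -/
def contractVertex [NeZero k] : Vertex k → Fin k × Bool
  | .inl p => p
  | .inr b => (0, b)

/-- The tail, in `G_k / {e_1, e_2}`, of an edge. -/
def Edge.ctail [NeZero k] (e : Edge k) : Fin k × Bool := contractVertex e.tail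

/-- The head, in `G_k / {e_1, e_2}`, of an edge. -/
def Edge.chead [NeZero k] (e : Edge k) : Fin k × Bool := contractVertex e.head

/-- `v` is a vertex of the subgraph of `G_k / {e_1, e_2}` formed by the edge set `S`. -/
def Touches [NeZero k] (S : Set (Edge k)) (v : Fin k × Bool) : Prop :=
  ∃ e ∈ S, e.ctail = v ∨ e.chead = v

/-- The degree of the vertex `v` in the subgraph of `G_k / {e_1, e_2}` with edge set `S`. -/
noncomputable def degreeIn [NeZero k] (S : Set (Edge k)) (v : Fin k × Bool) : ℕ :=
  {e ∈ S | e.ctail = v}.ncard + {e ∈ S | e.chead = v}.ncard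

/-- The edge set `S` forms a cycle of the multigraph `G_k / {e_1, e_2}`: the subgraph it
spans is connected and `2`-regular. -/
def IsCycleIn [NeZero k] (S : Set (Edge k)) : Prop :=
  S.Nonempty ∧ Edge.e1 ∉ S ∧ Edge.e2 ∉ S ∧
  (∀ v, Touches S v → degreeIn S v = 2) ∧
  (∀ T ⊆ S, T.Nonempty → (S \ T).Nonempty → ∃ v, Touches T v ∧ Touches (S \ T) v)

/-- The star `δ_G(v)` of a vertex `v` of the contracted graph `G_k / {e_1, e_2}`:
all edges of that graph incident with `v`. -/
def contractStar (k : ℕ) [NeZero k] (v : Fin k × Bool) : Set (Edge k) :=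
  {e | e ≠ .e1 ∧ e ≠ .e2 ∧ (e.ctail = v ∨ e.chead = v)}

/-- The star `δ(v)` of a vertex `v` of the graph `G_k`: all edges of `G_k` incident with `v`. -/
def star (k : ℕ) [NeZero k] (v : Vertex k) : Set (Edge k) :=
  {e | e.tail = v ∨ e.head = v}

end Graphs

section FreeBasisAux

open Finset

variable {k : ℕ}

instance Edge.finite : Finite (Edge k) := by
  apply Finite.of_surjective (fun p : (Fin k ⊕ Fin k ⊕ Fin k ⊕ Fin k) ⊕ Bool =>
    match p with
    | .inl (.inl i) => Edge.a i
    | .inl (.inr (.inl i)) => Edge.b i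
    | .inl (.inr (.inr (.inl i))) => Edge.c i
    | .inl (.inr (.inr (.inr i))) => Edge.d i
    | .inr false => Edge.e1
    | .inr true => Edge.e2)
  intro e
  cases e with
  | a i => exact ⟨.inl (.inl i), rfl⟩
  | b i => exact ⟨.inl (.inr (.inl i)), rfl⟩
  | c i => exact ⟨.inl (.inr (.inr (.inl i))), rfl⟩
  | d i => exact ⟨.inl (.inr (.inr (.inr i))), rfl⟩
  | e1 => exact ⟨.inr false, rfl⟩
  | e2 => exact ⟨.inr true, rfl⟩

lemma fin_add_one_val [NeZero k] (hk : 2 ≤ k) (i : Fin k) :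
    ((i + 1 : Fin k)).val = (i.val + 1) % k := by
  rw [Fin.add_def]
  simp only [Fin.val_one']
  rw [Nat.mod_eq_of_lt (show 1 < k by omega)]

lemma lastIdx_val [NeZero k] : (lastIdx k).val = k - 1 := rfl

lemma fin_add_one_eq_zero_iff [NeZero k] (hk : 2 ≤ k) (i : Fin k) :
    i + 1 = 0 ↔ i = lastIdx k := by
  rw [Fin.ext_iff, Fin.ext_iff, fin_add_one_val hk, lastIdx_val, Fin.val_zero]
  have hi := i.isLt
  constructor
  · intro h
    rcases Nat.lt_or_ge (i.val + 1) k with h' | h'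
    · rw [Nat.mod_eq_of_lt h'] at h; omega
    · omega
  · intro h
    have : i.val + 1 = k := by omega
    rw [this, Nat.mod_self]

lemma fin_add_one_val_of_ne_last [NeZero k] (hk : 2 ≤ k) (i : Fin k) (h : i ≠ lastIdx k) :
    ((i + 1 : Fin k)).val = i.val + 1 := by
  rw [fin_add_one_val hk]
  have hi := i.isLt
  have : i.val ≠ k - 1 := fun hh => h (Fin.ext (by rw [lastIdx_val]; exact hh))
  exact Nat.mod_eq_of_lt (by omega)

/-- The pairing `⟨w, col e⟩`. -/
noncomputable def pairF [NeZero k] (w : Vertex k → ℝ) (e : Edge k) : ℝ :=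
  w e.tail - gammaF e * w e.head

lemma tail_ne_head [NeZero k] (hk : 2 ≤ k) (e : Edge k) : e.tail ≠ e.head := by
  have key : ∀ i : Fin k, i + 1 ≠ i := by
    intro i h
    have h2 := congrArg Fin.val h
    rw [fin_add_one_val hk] at h2
    have hi := i.isLt
    rcases Nat.lt_or_ge (i.val + 1) k with h' | h'
    · rw [Nat.mod_eq_of_lt h'] at h2; omega
    · have he : i.val + 1 = k := by omega
      rw [he, Nat.mod_self] at h2; omega
  cases e <;> simp only [Edge.tail, Edge.head] <;> try (split_ifs <;> simp_all)
  all_goals intro h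
  all_goals first
    | (injection h with h'; exact absurd (Prod.ext_iff.1 h').1.symm (key _))
    | simp_all

lemma sum_frame_eq_pairF [NeZero k] (hk : 2 ≤ k) (w : Vertex k → ℝ) (e : Edge k) :
    ∑ v : Vertex k, w v * frameMatrix k v e = pairF w e := by
  have hne := tail_ne_head hk e
  have : ∀ v : Vertex k, w v * frameMatrix k v e =
      (if v = e.tail then w v else 0) + (if v = e.head then -gammaF e * w v else 0) := by
    intro v
    unfold frameMatrix
    split_ifs with h1 h2 <;> simp_all <;> ring
  rw [Finset.sum_congr rfl (fun v _ => this v), Finset.sum_add_distrib,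
    Finset.sum_ite_eq' Finset.univ e.tail w,
    Finset.sum_ite_eq' Finset.univ e.head (fun v => -gammaF e * w v)]
  simp [pairF]
  ring

end FreeBasisAux
section FreeBasisDuals

open Finset

variable {k : ℕ}

lemma pairF_a [NeZero k] (hk : 2 ≤ k) (w : Vertex k → ℝ) (i : Fin k) :
    pairF w (.a i) = if h : (i : ℕ) = k - 1 then w (.inl (i, false)) - 2 * w (.inr false)
      else w (.inl (i, false)) -
        w (.inl (⟨(i : ℕ) + 1, by have := i.isLt; omega⟩, false)) := by
  simp only [pairF, Edge.tail, Edge.head, gammaF]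
  by_cases h : i = lastIdx k
  · rw [if_pos ((fin_add_one_eq_zero_iff hk i).2 h), if_pos h,
      dif_pos (by rw [h, lastIdx_val])]
  · have hv : (i : ℕ) ≠ k - 1 := fun hh => h (Fin.ext (by rw [lastIdx_val]; exact hh))
    rw [if_neg (fun hh => h ((fin_add_one_eq_zero_iff hk i).1 hh)), if_neg h, dif_neg hv]
    have hEq : (i + 1 : Fin k) = (⟨(i : ℕ) + 1, by have := i.isLt; omega⟩ : Fin k) :=
      Fin.ext (by rw [fin_add_one_val_of_ne_last hk i h])
    rw [hEq]
    ring

lemma pairF_b [NeZero k] (hk : 2 ≤ k) (w : Vertex k → ℝ) (i : Fin k) :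
    pairF w (.b i) = if h : (i : ℕ) = k - 1 then w (.inl (i, false)) - 2 * w (.inr true)
      else w (.inl (i, false)) -
        w (.inl (⟨(i : ℕ) + 1, by have := i.isLt; omega⟩, true)) := by
  simp only [pairF, Edge.tail, Edge.head, gammaF]
  by_cases h : i = lastIdx k
  · rw [if_pos ((fin_add_one_eq_zero_iff hk i).2 h), if_pos h,
      dif_pos (by rw [h, lastIdx_val])]
  · have hv : (i : ℕ) ≠ k - 1 := fun hh => h (Fin.ext (by rw [lastIdx_val]; exact hh))
    rw [if_neg (fun hh => h ((fin_add_one_eq_zero_iff hk i).1 hh)), if_neg h, dif_neg hv]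
    have hEq : (i + 1 : Fin k) = (⟨(i : ℕ) + 1, by have := i.isLt; omega⟩ : Fin k) :=
      Fin.ext (by rw [fin_add_one_val_of_ne_last hk i h])
    rw [hEq]
    ring

lemma pairF_c [NeZero k] (hk : 2 ≤ k) (w : Vertex k → ℝ) (i : Fin k) :
    pairF w (.c i) = if h : (i : ℕ) = k - 1 then w (.inl (i, true)) - 2 * w (.inr false)
      else w (.inl (i, true)) -
        w (.inl (⟨(i : ℕ) + 1, by have := i.isLt; omega⟩, false)) := by
  simp only [pairF, Edge.tail, Edge.head, gammaF]
  by_cases h : i = lastIdx k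
  · rw [if_pos ((fin_add_one_eq_zero_iff hk i).2 h), if_pos h,
      dif_pos (by rw [h, lastIdx_val])]
  · have hv : (i : ℕ) ≠ k - 1 := fun hh => h (Fin.ext (by rw [lastIdx_val]; exact hh))
    rw [if_neg (fun hh => h ((fin_add_one_eq_zero_iff hk i).1 hh)), if_neg h, dif_neg hv]
    have hEq : (i + 1 : Fin k) = (⟨(i : ℕ) + 1, by have := i.isLt; omega⟩ : Fin k) :=
      Fin.ext (by rw [fin_add_one_val_of_ne_last hk i h])
    rw [hEq]
    ring

lemma pairF_d [NeZero k] (hk : 2 ≤ k) (w : Vertex k → ℝ) (i : Fin k) :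
    pairF w (.d i) = if h : (i : ℕ) = k - 1 then w (.inl (i, true)) - 2 * w (.inr true)
      else w (.inl (i, true)) -
        w (.inl (⟨(i : ℕ) + 1, by have := i.isLt; omega⟩, true)) := by
  simp only [pairF, Edge.tail, Edge.head, gammaF]
  by_cases h : i = lastIdx k
  · rw [if_pos ((fin_add_one_eq_zero_iff hk i).2 h), if_pos h,
      dif_pos (by rw [h, lastIdx_val])]
  · have hv : (i : ℕ) ≠ k - 1 := fun hh => h (Fin.ext (by rw [lastIdx_val]; exact hh))
    rw [if_neg (fun hh => h ((fin_add_one_eq_zero_iff hk i).1 hh)), if_neg h, dif_neg hv]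
    have hEq : (i + 1 : Fin k) = (⟨(i : ℕ) + 1, by have := i.isLt; omega⟩ : Fin k) :=
      Fin.ext (by rw [fin_add_one_val_of_ne_last hk i h])
    rw [hEq]
    ring

lemma pairF_e1 [NeZero k] (w : Vertex k → ℝ) :
    pairF w .e1 = w (.inl (0, false)) - w (.inr false) := by
  simp only [pairF, Edge.tail, Edge.head, gammaF]; ring

lemma pairF_e2 [NeZero k] (w : Vertex k → ℝ) :
    pairF w .e2 = w (.inl (0, true)) - w (.inr true) := by
  simp only [pairF, Edge.tail, Edge.head, gammaF]; ring

/-- Dual vectors for the basis `P ∪ {e1, e2}`. -/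
noncomputable def wP [NeZero k] : Edge k → Vertex k → ℝ
  | .a m => fun v => match v with
    | .inl (j, false) => if m.val < j.val then -2 else -1
    | .inl (_, true) => 0
    | .inr false => -1
    | .inr true => 0
  | .d m => fun v => match v with
    | .inl (_, false) => 0
    | .inl (j, true) => if m.val < j.val then -2 else -1
    | .inr false => 0
    | .inr true => -1
  | .e1 => fun v => match v with
    | .inl (_, false) => 2
    | .inl (_, true) => 0
    | .inr false => 1
    | .inr true => 0
  | .e2 => fun v => match v with
    | .inl (_, false) => 0
    | .inl (_, true) => 2
    | .inr false => 0
    | .inr true => 1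
  | _ => 0

lemma mem_BP_iff (e : Edge k) :
    e ∈ Pset k ∪ {Edge.e1, Edge.e2} ↔
      (∃ i, e = .a i) ∨ (∃ i, e = .d i) ∨ e = .e1 ∨ e = .e2 := by
  simp only [Pset, Set.mem_union, Set.mem_setOf_eq, Set.mem_insert_iff, Set.mem_singleton_iff]
  constructor
  · rintro (⟨i, h | h⟩ | h | h)
    · exact Or.inl ⟨i, h⟩
    · exact Or.inr (Or.inl ⟨i, h⟩)
    · exact Or.inr (Or.inr (Or.inl h))
    · exact Or.inr (Or.inr (Or.inr h))
  · rintro (⟨i, h⟩ | ⟨i, h⟩ | h | h)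
    · exact Or.inl ⟨i, Or.inl h⟩
    · exact Or.inl ⟨i, Or.inr h⟩
    · exact Or.inr (Or.inl h)
    · exact Or.inr (Or.inr h)

lemma wP_dual [NeZero k] (hk : 7 ≤ k) :
    ∀ b ∈ Pset k ∪ {Edge.e1, Edge.e2}, ∀ e ∈ Pset k ∪ {Edge.e1, Edge.e2},
      pairF (wP b) e = if b = e then 1 else 0 := by
  have h2 : 2 ≤ k := by omega
  intro b hb e he
  rw [mem_BP_iff] at hb he
  obtain (⟨m, rfl⟩ | ⟨m, rfl⟩ | rfl | rfl) := hb <;>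
    obtain (⟨i, rfl⟩ | ⟨i, rfl⟩ | rfl | rfl) := he <;>
    simp only [pairF_a h2, pairF_b h2, pairF_c h2, pairF_d h2, pairF_e1, pairF_e2, wP,
      Edge.a.injEq, Edge.d.injEq, ← Fin.val_inj, reduceCtorEq]
  all_goals try have hm := m.isLt
  all_goals try have hi := i.isLt
  all_goals try simp only [Fin.val_zero]
  all_goals split_ifs <;> first | (exfalso; omega) | contradiction | norm_num

lemma wP_nonzero [NeZero k] (hk : 7 ≤ k) :
    ∀ b ∈ Pset k ∪ {Edge.e1, Edge.e2}, ∀ x : Edge k, x ∉ Pset k ∪ {Edge.e1, Edge.e2} →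
      pairF (wP b) x ≠ 0 := by
  have h2 : 2 ≤ k := by omega
  intro b hb x hx
  have hxf : (∃ t, x = .b t) ∨ (∃ t, x = .c t) := by
    cases x with
    | a i => exact absurd ((mem_BP_iff _).2 (Or.inl ⟨i, rfl⟩)) hx
    | d i => exact absurd ((mem_BP_iff _).2 (Or.inr (Or.inl ⟨i, rfl⟩))) hx
    | e1 => exact absurd ((mem_BP_iff _).2 (Or.inr (Or.inr (Or.inl rfl)))) hx
    | e2 => exact absurd ((mem_BP_iff _).2 (Or.inr (Or.inr (Or.inr rfl)))) hx
    | b t => exact Or.inl ⟨t, rfl⟩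
    | c t => exact Or.inr ⟨t, rfl⟩
  rw [mem_BP_iff] at hb
  obtain (⟨m, rfl⟩ | ⟨m, rfl⟩ | rfl | rfl) := hb <;>
    obtain (⟨t, rfl⟩ | ⟨t, rfl⟩) := hxf <;>
    simp only [pairF_b h2, pairF_c h2, wP, Fin.val_zero]
  all_goals try have hm := m.isLt
  all_goals try have ht := t.isLt
  all_goals split_ifs <;> first | (exfalso; omega) | contradiction | norm_num

end FreeBasisDuals
section FreeBasisQ

open Finset

variable {k : ℕ}

/-- Dual vectors for the basis `Q ∪ {e1, e2}`. -/
noncomputable def wQ [NeZero k] : Edge k → Vertex k → ℝ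
  | .b m => fun v => match v with
    | .inl (j, false) =>
        if j.val % 2 = m.val % 2 then (if j.val ≤ m.val then -1/3 else -4/3) else -2/3
    | .inl (j, true) =>
        if j.val % 2 = m.val % 2 then -2/3 else (if j.val ≤ m.val then -1/3 else -4/3)
    | .inr false => if m.val % 2 = 0 then -1/3 else -2/3
    | .inr true => if m.val % 2 = 0 then -2/3 else -1/3
  | .c m => fun v => match v with
    | .inl (j, false) =>
        if j.val % 2 = m.val % 2 then -2/3 else (if j.val ≤ m.val then -1/3 else -4/3)
    | .inl (j, true) =>
        if j.val % 2 = m.val % 2 then (if j.val ≤ m.val then -1/3 else -4/3) else -2/3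
    | .inr false => if m.val % 2 = 0 then -2/3 else -1/3
    | .inr true => if m.val % 2 = 0 then -1/3 else -2/3
  | .e1 => fun v => match v with
    | .inl (j, false) => if j.val % 2 = 0 then 4/3 else 2/3
    | .inl (j, true) => if j.val % 2 = 0 then 2/3 else 4/3
    | .inr false => 1/3
    | .inr true => 2/3
  | .e2 => fun v => match v with
    | .inl (j, false) => if j.val % 2 = 0 then 2/3 else 4/3
    | .inl (j, true) => if j.val % 2 = 0 then 4/3 else 2/3
    | .inr false => 2/3
    | .inr true => 1/3
  | _ => 0

lemma mem_BQ_iff (e : Edge k) :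
    e ∈ Qset k ∪ {Edge.e1, Edge.e2} ↔
      (∃ i, e = .b i) ∨ (∃ i, e = .c i) ∨ e = .e1 ∨ e = .e2 := by
  simp only [Qset, Set.mem_union, Set.mem_setOf_eq, Set.mem_insert_iff, Set.mem_singleton_iff]
  constructor
  · rintro (⟨i, h | h⟩ | h | h)
    · exact Or.inl ⟨i, h⟩
    · exact Or.inr (Or.inl ⟨i, h⟩)
    · exact Or.inr (Or.inr (Or.inl h))
    · exact Or.inr (Or.inr (Or.inr h))
  · rintro (⟨i, h⟩ | ⟨i, h⟩ | h | h)
    · exact Or.inl ⟨i, Or.inl h⟩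
    · exact Or.inl ⟨i, Or.inr h⟩
    · exact Or.inr (Or.inl h)
    · exact Or.inr (Or.inr h)

lemma wQ_dual [NeZero k] (hk : 7 ≤ k) (hodd : Odd k) :
    ∀ b ∈ Qset k ∪ {Edge.e1, Edge.e2}, ∀ e ∈ Qset k ∪ {Edge.e1, Edge.e2},
      pairF (wQ b) e = if b = e then 1 else 0 := by
  have h2 : 2 ≤ k := by omega
  have hk2 : k % 2 = 1 := Nat.odd_iff.mp hodd
  intro b hb e he
  rw [mem_BQ_iff] at hb he
  obtain (⟨m, rfl⟩ | ⟨m, rfl⟩ | rfl | rfl) := hb <;>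
    obtain (⟨i, rfl⟩ | ⟨i, rfl⟩ | rfl | rfl) := he <;>
    simp only [pairF_b h2, pairF_c h2, pairF_e1, pairF_e2, wQ,
      Edge.b.injEq, Edge.c.injEq, ← Fin.val_inj, reduceCtorEq, Fin.val_zero, Nat.zero_mod,
        show ∀ n : ℕ, (0 = n % 2) ↔ (n % 2 = 0) from fun _ => eq_comm]
  all_goals try have hm := m.isLt
  all_goals try have hi := i.isLt
  all_goals split_ifs <;> first | (exfalso; omega) | contradiction | norm_num

lemma wQ_nonzero [NeZero k] (hk : 7 ≤ k) (hodd : Odd k) :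
    ∀ b ∈ Qset k ∪ {Edge.e1, Edge.e2}, ∀ x : Edge k, x ∉ Qset k ∪ {Edge.e1, Edge.e2} →
      pairF (wQ b) x ≠ 0 := by
  have h2 : 2 ≤ k := by omega
  have hk2 : k % 2 = 1 := Nat.odd_iff.mp hodd
  intro b hb x hx
  have hxf : (∃ t, x = .a t) ∨ (∃ t, x = .d t) := by
    cases x with
    | b i => exact absurd ((mem_BQ_iff _).2 (Or.inl ⟨i, rfl⟩)) hx
    | c i => exact absurd ((mem_BQ_iff _).2 (Or.inr (Or.inl ⟨i, rfl⟩))) hx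
    | e1 => exact absurd ((mem_BQ_iff _).2 (Or.inr (Or.inr (Or.inl rfl)))) hx
    | e2 => exact absurd ((mem_BQ_iff _).2 (Or.inr (Or.inr (Or.inr rfl)))) hx
    | a t => exact Or.inl ⟨t, rfl⟩
    | d t => exact Or.inr ⟨t, rfl⟩
  rw [mem_BQ_iff] at hb
  obtain (⟨m, rfl⟩ | ⟨m, rfl⟩ | rfl | rfl) := hb <;>
    obtain (⟨i, rfl⟩ | ⟨i, rfl⟩) := hxf <;>
    simp only [pairF_a h2, pairF_d h2, wQ, ← Fin.val_inj, Fin.val_zero]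
  all_goals try have hm := m.isLt
  all_goals try have hi := i.isLt
  all_goals split_ifs <;> first | (exfalso; omega) | contradiction | norm_num

lemma wP_nonzero' [NeZero k] (hk : 7 ≤ k) :
    ∀ b ∈ Pset k ∪ {Edge.e1, Edge.e2}, ∀ x : Edge k, x ∉ Pset k ∪ {Edge.e1, Edge.e2} →
      pairF (wP b) x ≠ 0 := wP_nonzero hk

end FreeBasisQ
section FreeBasisEngine

open Finset

variable {k : ℕ}

lemma sum_pair_eq_zero [NeZero k] (hk : 2 ≤ k) {I : Set (Edge k)} [Fintype ↥I]
    (g : ↥I → ℝ)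
    (hg : ∑ i : ↥I, g i • (fun v => frameMatrix k v (i : Edge k)) = 0)
    (wv : Vertex k → ℝ) :
    ∑ i : ↥I, g i * pairF wv (i : Edge k) = 0 := by
  have h1 : ∀ v : Vertex k, ∑ i : ↥I, g i * frameMatrix k v (i : Edge k) = 0 := by
    intro v
    have h := congrFun hg v
    simpa [Finset.sum_apply] using h
  calc ∑ i : ↥I, g i * pairF wv (i : Edge k)
      = ∑ i : ↥I, ∑ v : Vertex k, g i * (wv v * frameMatrix k v (i : Edge k)) := by
        refine Finset.sum_congr rfl fun i _ => ?_
        rw [← Finset.mul_sum, sum_frame_eq_pairF hk]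
    _ = ∑ v : Vertex k, ∑ i : ↥I, g i * (wv v * frameMatrix k v (i : Edge k)) :=
        Finset.sum_comm
    _ = ∑ v : Vertex k, wv v * ∑ i : ↥I, g i * frameMatrix k v (i : Edge k) := by
        refine Finset.sum_congr rfl fun v _ => ?_
        rw [Finset.mul_sum]
        exact Finset.sum_congr rfl fun i _ => by ring
    _ = 0 := by
        refine Finset.sum_eq_zero fun v _ => ?_
        rw [h1 v, mul_zero]

lemma sum_single_subtype {I : Set (Edge k)} [Fintype ↥I] (F : ↥I → ℝ) (a : Edge k)
    (ha : a ∈ I) (h0 : ∀ i : ↥I, (i : Edge k) ≠ a → F i = 0) :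
    ∑ i : ↥I, F i = F ⟨a, ha⟩ :=
  Finset.sum_eq_single ⟨a, ha⟩ (fun b _ hb => h0 b (fun hh => hb (Subtype.ext hh)))
    (fun h => absurd (Finset.mem_univ _) h)

lemma isFreeBase_of_dual [NeZero k] (hk : 7 ≤ k) {N : Matroid (Edge k)}
    (hN : IsColMatroid (frameMatrix k) N) (B : Set (Edge k)) (w : Edge k → Vertex k → ℝ)
    (f : (Fin k ⊕ Fin k) ⊕ Bool → Edge k) (hf : Function.Injective f) (hfB : ∀ p, f p ∈ B)
    (hdual : ∀ b ∈ B, ∀ e ∈ B, pairF (w b) e = if b = e then 1 else 0)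
    (hnz : ∀ b ∈ B, ∀ x : Edge k, x ∉ B → pairF (w b) x ≠ 0) :
    N.IsFreeBase B := by
  have h2 : 2 ≤ k := by omega
  -- B is independent
  have hindB : N.Indep B := by
    rw [hN.2]
    haveI : Fintype ↥B := Fintype.ofFinite _
    rw [Fintype.linearIndependent_iff]
    intro g hg b
    have h0 := sum_pair_eq_zero h2 g hg (w (b : Edge k))
    rw [sum_single_subtype (fun i => g i * pairF (w (b : Edge k)) (i : Edge k)) b b.2
      (fun i hi => by
        rw [hdual (b : Edge k) b.2 (i : Edge k) i.2, if_neg (fun hh => hi hh.symm), mul_zero])]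
      at h0
    dsimp only at h0
    rw [hdual (b : Edge k) b.2 (b : Edge k) b.2, if_pos rfl, mul_one] at h0
    simpa using h0
  -- inserting any element outside B destroys independence (cardinality)
  have hnotind : ∀ x ∉ B, ¬ N.Indep (insert x B) := by
    intro x hx hind
    rw [hN.2] at hind
    haveI : Fintype ↥(insert x B) := Fintype.ofFinite _
    have hcard := hind.fintype_card_le_finrank
    rw [Module.finrank_fintype_fun_eq_card] at hcard
    have hVcard : Fintype.card (Vertex k) = 2 * k + 2 := by
      simp [Fintype.card_sum, Fintype.card_prod]
      omega
    have hxf : ∀ q, f q ≠ x := fun q hq => hx (hq ▸ hfB q)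
    have hinj : Function.Injective (fun p : Option ((Fin k ⊕ Fin k) ⊕ Bool) =>
        (Option.rec (⟨x, Set.mem_insert _ _⟩ : ↥(insert x B))
          (fun q => ⟨f q, Set.mem_insert_of_mem _ (hfB q)⟩) p : ↥(insert x B))) := by
      rintro (_ | p') (_ | q') hpq <;> have h' := congrArg Subtype.val hpq <;> dsimp at h'
      · rfl
      · exact absurd h'.symm (hxf _)
      · exact absurd h' (hxf _)
      · rw [hf h']
    have hle := Fintype.card_le_of_injective _ hinj
    rw [Fintype.card_option] at hle
    have hc2 : Fintype.card ((Fin k ⊕ Fin k) ⊕ Bool) = 2 * k + 2 := by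
      simp [Fintype.card_sum]
      omega
    rw [hc2] at hle
    rw [hVcard] at hcard
    omega
  -- exchange independence
  have hexch : ∀ x ∉ B, ∀ f0 ∈ B, N.Indep (insert x (B \ {f0})) := by
    intro x hx f0 hf0
    rw [hN.2]
    haveI : Fintype ↥(insert x (B \ {f0})) := Fintype.ofFinite _
    rw [Fintype.linearIndependent_iff]
    intro g hg
    have hxJ : x ∈ insert x (B \ {f0}) := Set.mem_insert _ _
    have hgx : g ⟨x, hxJ⟩ = 0 := by
      have h0 := sum_pair_eq_zero h2 g hg (w f0)
      rw [sum_single_subtype (fun i => g i * pairF (w f0) (i : Edge k)) x hxJ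
        (fun i hi => by
          have hiB : (i : Edge k) ∈ B \ {f0} := (Set.mem_insert_iff.1 i.2).resolve_left hi
          rw [hdual f0 hf0 (i : Edge k) hiB.1,
            if_neg (fun hh => hiB.2 hh.symm), mul_zero])] at h0
      dsimp only at h0
      exact (mul_eq_zero.mp h0).resolve_right (hnz f0 hf0 x hx)
    intro i
    rcases Set.mem_insert_iff.1 i.2 with hix | hiB
    · rw [show i = ⟨x, hxJ⟩ from Subtype.ext hix]
      exact hgx
    · have h0 := sum_pair_eq_zero h2 g hg (w (i : Edge k))
      rw [sum_single_subtype (fun j => g j * pairF (w (i : Edge k)) (j : Edge k))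
        (i : Edge k) i.2
        (fun j hj => by
          rcases Set.mem_insert_iff.1 j.2 with hjx | hjB
          · rw [show j = ⟨x, hxJ⟩ from Subtype.ext hjx, hgx, zero_mul]
          · rw [hdual (i : Edge k) hiB.1 (j : Edge k) hjB.1,
              if_neg (fun hh => hj hh.symm), mul_zero])] at h0
      dsimp only at h0
      rw [hdual (i : Edge k) hiB.1 (i : Edge k) hiB.1, if_pos rfl, mul_one] at h0
      simpa using h0
  -- B is a base
  have hBase : N.IsBase B := hindB.isBase_of_forall_insert (fun e he => hnotind e he.2)
  refine ⟨hBase, fun e he => ⟨?_, ?_⟩⟩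
  · rw [Matroid.dep_iff]
    exact ⟨hnotind e he.2, by rw [hN.1]; exact Set.subset_univ _⟩
  · intro D hD
    obtain ⟨f0, hf0mem, hf0D⟩ := Set.exists_of_ssubset hD
    rcases Set.mem_insert_iff.1 hf0mem with hfe | hf0B
    · refine hindB.subset fun y hy => ?_
      rcases Set.mem_insert_iff.1 (hD.1 hy) with hye | hyB
      · exact absurd hy (by rw [hye, ← hfe]; exact hf0D)
      · exact hyB
    · refine (hexch e he.2 f0 hf0B).subset fun y hy => ?_
      rcases Set.mem_insert_iff.1 (hD.1 hy) with hye | hyB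
      · exact hye ▸ Set.mem_insert _ _
      · refine Set.mem_insert_of_mem _ ⟨hyB, fun hyf => ?_⟩
        rw [Set.mem_singleton_iff] at hyf
        exact hf0D (hyf ▸ hy)

end FreeBasisEngine
section FreeBasisFinal

variable {k : ℕ}

def fP (k : ℕ) : (Fin k ⊕ Fin k) ⊕ Bool → Edge k
  | .inl (.inl i) => .a i
  | .inl (.inr i) => .d i
  | .inr false => .e1
  | .inr true => .e2

def fQ (k : ℕ) : (Fin k ⊕ Fin k) ⊕ Bool → Edge k
  | .inl (.inl i) => .b i
  | .inl (.inr i) => .c i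
  | .inr false => .e1
  | .inr true => .e2

lemma fP_inj : Function.Injective (fP k) := by
  rintro ((i | i) | (_ | _)) ((j | j) | (_ | _)) h <;> simp_all [fP]

lemma fQ_inj : Function.Injective (fQ k) := by
  rintro ((i | i) | (_ | _)) ((j | j) | (_ | _)) h <;> simp_all [fQ]

lemma fP_mem : ∀ p, fP k p ∈ Pset k ∪ {Edge.e1, Edge.e2} := by
  rintro ((i | i) | (_ | _))
  · exact (mem_BP_iff _).2 (Or.inl ⟨i, rfl⟩)
  · exact (mem_BP_iff _).2 (Or.inr (Or.inl ⟨i, rfl⟩))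
  · exact (mem_BP_iff _).2 (Or.inr (Or.inr (Or.inl rfl)))
  · exact (mem_BP_iff _).2 (Or.inr (Or.inr (Or.inr rfl)))

lemma fQ_mem : ∀ p, fQ k p ∈ Qset k ∪ {Edge.e1, Edge.e2} := by
  rintro ((i | i) | (_ | _))
  · exact (mem_BQ_iff _).2 (Or.inl ⟨i, rfl⟩)
  · exact (mem_BQ_iff _).2 (Or.inr (Or.inl ⟨i, rfl⟩))
  · exact (mem_BQ_iff _).2 (Or.inr (Or.inr (Or.inl rfl)))
  · exact (mem_BQ_iff _).2 (Or.inr (Or.inr (Or.inr rfl)))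

end FreeBasisFinal

/-- Both `P ∪ {e_1, e_2}` and `Q ∪ {e_1, e_2}` are free bases of the matroid `N_k`. -/
theorem free_bases_of_Nk (k : ℕ) [NeZero k] (hk : 7 ≤ k) (hodd : Odd k)
    (N : Matroid (Edge k)) (hN : IsColMatroid (frameMatrix k) N) :
    N.IsFreeBase (Pset k ∪ {Edge.e1, Edge.e2}) ∧
    N.IsFreeBase (Qset k ∪ {Edge.e1, Edge.e2}) := by
  constructor
  · exact isFreeBase_of_dual hk hN _ wP (fP k) fP_inj fP_mem (wP_dual hk) (wP_nonzero hk)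
  · exact isFreeBase_of_dual hk hN _ wQ (fQ k) fQ_inj fQ_mem (wQ_dual hk hodd)
      (wQ_nonzero hk hodd)
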